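/- Let γ > −1 be real and let (a_j)_{j≥1} be a sequence of real numbers satisfying a_{2m−1} = (2/(2m−2))·Σ_{j=1}^{2m−2} a_j for all m ≥ 2 and a_{2m} = (2/(2m−1+γ))·Σ_{j=1}^{2m−1} a_j for all m ≥ 1. Then, with t := 2a₁/(1+γ), one has for all j ≥ 1: a_j = (j/2)·t if j is even and a_j = ((j+γ)/2)·t if j is odd. -/

import Mathlib

/-- **Solution of the system (2.12).**  If a real sequence `(a_j)_{j ≥ 1}` satisfies
`a_{2m-1} = (2/(2m-2)) · Σ_{j=1}^{2m-2} a_j` for all `m ≥ 2` and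
`a_{2m} = (2/(2m-1+γ)) · Σ_{j=1}^{2m-1} a_j` for all `m ≥ 1`, then, with
`t := 2a₁/(1+γ)`, one has `a_j = (j/2)·t` for even `j ≥ 1` and `a_j = ((j+γ)/2)·t`
for odd `j ≥ 1`.  These are exactly the recurrence coefficients of the generalized
Hermite polynomials (with `t = c⁻²` for a scaling factor `c > 0`). -/
theorem genHermite_recurrence_system (γ : ℝ) (hγ : -1 < γ) (a : ℕ → ℝ)
    (hodd : ∀ m ≥ 2, a (2 * m - 1) =
      (2 / (2 * (m : ℝ) - 2)) * ∑ j ∈ Finset.Icc 1 (2 * m - 2), a j)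
    (heven : ∀ m ≥ 1, a (2 * m) =
      (2 / (2 * (m : ℝ) - 1 + γ)) * ∑ j ∈ Finset.Icc 1 (2 * m - 1), a j) :
    ∀ j ≥ 1,
      (Even j → a j = ((j : ℝ) / 2) * (2 * a 1 / (1 + γ))) ∧
      (Odd j → a j = (((j : ℝ) + γ) / 2) * (2 * a 1 / (1 + γ))) := by
  set t := 2 * a 1 / (1 + γ) with ht
  have hγ0 : (1:ℝ) + γ ≠ 0 := by linarith
  have ha1 : a 1 = (1 + γ) / 2 * t := by
    rw [ht]; field_simp
  clear_value t
  have key : ∀ m : ℕ, 1 ≤ m →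
      a (2 * m - 1) = (2 * (m : ℝ) - 1 + γ) / 2 * t ∧
      a (2 * m) = (m : ℝ) * t ∧
      (∑ j ∈ Finset.Icc 1 (2 * m), a j) = (m : ℝ) * (2 * m + 1 + γ) / 2 * t := by
    intro m hm
    induction m with
    | zero => omega
    | succ n ih =>
      rcases Nat.eq_zero_or_pos n with hn | hn
      · subst hn
        have h1 : a (2 * 1 - 1) = (2 * ((1:ℕ) : ℝ) - 1 + γ) / 2 * t := by
          norm_num [ha1]
        have hs1 : (∑ j ∈ Finset.Icc 1 (2 * 1 - 1), a j) = a 1 := by norm_num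
        have h2 := heven 1 le_rfl
        rw [hs1, ha1] at h2
        have h2' : a (2 * 1) = ((1:ℕ) : ℝ) * t := by
          rw [h2]; push_cast
          rw [show (2:ℝ) * 1 - 1 + γ = 1 + γ from by ring]
          field_simp
        refine ⟨h1, h2', ?_⟩
        have hset : Finset.Icc 1 (2 * 1) = {1, 2} := by decide
        rw [hset, Finset.sum_insert (by decide), Finset.sum_singleton]
        have h2'' : a 2 = t := by have := h2'; norm_num at this; exact this
        rw [ha1, h2'']; push_cast; ring
      · obtain ⟨ho, he, hs⟩ := ih hn
        have hnR : (1:ℝ) ≤ (n : ℝ) := by exact_mod_cast hn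
        have hγn : 2 * (n : ℝ) + 1 + γ ≠ 0 := by linarith
        have hn0 : (2:ℝ) * n ≠ 0 := by linarith
        -- a (2n+1)
        have hodd' := hodd (n + 1) (by omega)
        have e1 : 2 * (n + 1) - 1 = 2 * n + 1 := by omega
        have e2 : 2 * (n + 1) - 2 = 2 * n := by omega
        rw [e1, e2, hs] at hodd'
        push_cast at hodd'
        rw [show (2:ℝ) * ((n:ℝ) + 1) - 2 = 2 * n from by ring] at hodd'
        have hA : a (2 * n + 1) = (2 * ((n:ℝ) + 1) - 1 + γ) / 2 * t := by
          rw [hodd']; field_simp; ring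
        -- sum up to 2n+1
        have hS1 : (∑ j ∈ Finset.Icc 1 (2 * n + 1), a j)
            = ((n:ℝ) + 1) * (2 * n + 1 + γ) / 2 * t := by
          rw [Finset.sum_Icc_succ_top (by omega), hs, hA]
          push_cast; ring
        -- a (2n+2)
        have heven' := heven (n + 1) (by omega)
        rw [e1, hS1] at heven'
        push_cast at heven'
        rw [show (2:ℝ) * ((n:ℝ) + 1) - 1 + γ = 2 * n + 1 + γ from by ring] at heven'
        have hB : a (2 * (n + 1)) = (((n + 1 : ℕ)) : ℝ) * t := by
          rw [heven']; field_simp; push_cast; ring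
        refine ⟨by rw [e1]; push_cast; exact hA, hB, ?_⟩
        have e3 : 2 * (n + 1) = (2 * n + 1) + 1 := by omega
        rw [e3, Finset.sum_Icc_succ_top (by omega), hS1, ← e3, hB]
        push_cast; ring
  intro j hj
  constructor
  · rintro ⟨m, rfl⟩
    have hm : 1 ≤ m := by omega
    have h := (key m hm).2.1
    rw [show m + m = 2 * m from by ring] at *
    rw [h]; push_cast; ring
  · rintro ⟨k, rfl⟩
    have h := (key (k + 1) (by omega)).1
    rw [show 2 * (k + 1) - 1 = 2 * k + 1 from by omega] at h
    rw [h]; push_cast; ring
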